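/- Let K be a commutative ring, C a unital K-algebra, n a positive natural number, A = Mat_{n×n}(C) the matrix algebra, and Δ ∈ A with matrix entries Δ_{ij} ∈ C. Then the following are equivalent: (i) the two-sided ideal of A generated by Δ equals A; (ii) for every nonzero left C-module M, the induced map Δ_M : M^n → M^n, given by (Δ_M m)_i = Σ_j Δ_{ij} m_j, is not the zero map. -/

import Mathlib

universe u v

/-- Let `C` be a unital `K`-algebra, `n > 0`, `A = Mat_{n×n}(C)` and
`Δ ∈ A`.  The two-sided ideal of `A` generated by `Δ` is all of `A` if and only if for every
nonzero left `C`-module `M` the induced map `Δ_M : M^n → M^n`, `(Δ_M m) i = ∑ j, Δ i j • m j`,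
is not the zero map. -/
theorem matrix_ideal_top_iff_acts_nontrivially {K : Type v} [CommRing K] {C : Type u} [Ring C]
    [Algebra K C] {n : ℕ} (hn : 0 < n) (Δ : Matrix (Fin n) (Fin n) C) :
    TwoSidedIdeal.span ({Δ} : Set (Matrix (Fin n) (Fin n) C)) = ⊤ ↔
      ∀ (M : Type u) [AddCommGroup M] [Module C M], Nontrivial M →
        ∃ (m : Fin n → M) (i : Fin n), ∑ j, Δ i j • m j ≠ 0 := by
  constructor
  · -- span = ⊤ → every nonzero module is acted on nontrivially
    intro htop M _ _ hM
    by_contra h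
    push_neg at h
    -- every entry annihilates M
    have hann : ∀ (i j : Fin n) (x : M), Δ i j • x = 0 := by
      intro i j x
      have := h (Pi.single j x) i
      simpa [Pi.single_apply, ite_smul, Finset.sum_ite_eq'] using this
    -- the annihilator of M as a two-sided ideal of C
    set S : TwoSidedIdeal C := TwoSidedIdeal.mk' {c : C | ∀ x : M, c • x = 0}
      (fun x => by simp)
      (fun {a b} ha hb x => by simp [add_smul, ha x, hb x])
      (fun {a} ha x => by simp [neg_smul, ha x])
      (fun {a b} hb x => by rw [mul_smul, hb x, smul_zero])
      (fun {a b} ha x => by rw [mul_smul, ha (b • x)]) with hS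
    -- the matrices with entries in S form a two-sided ideal of A
    set T : TwoSidedIdeal (Matrix (Fin n) (Fin n) C) :=
      TwoSidedIdeal.mk' {A : Matrix (Fin n) (Fin n) C | ∀ i j, A i j ∈ S}
      (fun i j => by
        show (0 : Matrix (Fin n) (Fin n) C) i j ∈ S
        rw [Matrix.zero_apply]
        exact S.zero_mem)
      (fun {a b} ha hb i j => by
        show (a + b) i j ∈ S
        rw [Matrix.add_apply]
        exact S.add_mem (ha i j) (hb i j))
      (fun {a} ha i j => by
        show (-a) i j ∈ S
        rw [Matrix.neg_apply]
        exact S.neg_mem (ha i j))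
      (fun {a b} hb i j => by
        show (a * b) i j ∈ S
        rw [Matrix.mul_apply]
        exact S.finsetSum_mem _ _ fun k _ => S.mul_mem_left _ _ (hb k j))
      (fun {a b} ha i j => by
        show (a * b) i j ∈ S
        rw [Matrix.mul_apply]
        exact S.finsetSum_mem _ _ fun k _ => S.mul_mem_right _ _ (ha i k)) with hT
    have hΔT : Δ ∈ T := by
      rw [hT, TwoSidedIdeal.mem_mk']
      intro i j
      rw [hS, TwoSidedIdeal.mem_mk']
      exact hann i j
    have h1T : (1 : Matrix (Fin n) (Fin n) C) ∈ T :=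
      TwoSidedIdeal.mem_span_iff.mp
        ((TwoSidedIdeal.one_mem_iff _).mpr htop) T (by simpa using hΔT)
    -- so `1 : C` annihilates M, contradiction
    obtain ⟨x, y, hxy⟩ := hM
    have hone : (1 : C) ∈ S := by
      have := (TwoSidedIdeal.mem_mk' _ _ _ _ _ _ (1 : Matrix (Fin n) (Fin n) C)).mp h1T
        ⟨0, hn⟩ ⟨0, hn⟩
      simpa [Matrix.one_apply] using this
    have hz : ∀ z : M, z = 0 := fun z => by
      have := (TwoSidedIdeal.mem_mk' _ _ _ _ _ _ (1 : C)).mp hone z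
      simpa using this
    exact hxy ((hz x).trans (hz y).symm)
  · -- every nonzero module acted on nontrivially → span = ⊤
    intro hmod
    -- J : two-sided ideal of C generated by the entries of Δ
    set entries : Set C := Set.range fun p : Fin n × Fin n => Δ p.1 p.2 with hentries
    set J : TwoSidedIdeal C := TwoSidedIdeal.span entries with hJ
    -- first, J = ⊤, by applying the hypothesis to C ⧸ J.asIdeal
    have hJtop : J = ⊤ := by
      by_contra hne
      have hlt : J.asIdeal < ⊤ := by
        rcases lt_or_eq_of_le (le_top (a := J.asIdeal)) with h | h
        · exact h
        · exact absurd (J.eq_top (TwoSidedIdeal.mem_asIdeal.mp (h.symm ▸ Submodule.mem_top))) hne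
      have hNT : Nontrivial (C ⧸ J.asIdeal) := Submodule.Quotient.nontrivial_iff.mpr hlt.ne
      obtain ⟨m, i, hmi⟩ := hmod (C ⧸ J.asIdeal) hNT
      apply hmi
      refine Finset.sum_eq_zero fun j _ => ?_
      obtain ⟨b, hb⟩ := Submodule.Quotient.mk_surjective _ (m j)
      rw [← hb, ← Submodule.Quotient.mk_smul, Submodule.Quotient.mk_eq_zero]
      have hent : Δ i j ∈ J := TwoSidedIdeal.subset_span ⟨(i, j), rfl⟩
      exact J.mul_mem_right _ _ hent
    -- the set of c with all stdBasisMatrix i j c in span {Δ} is a two-sided ideal of C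
    set spanΔ := TwoSidedIdeal.span ({Δ} : Set (Matrix (Fin n) (Fin n) C)) with hspan
    set S' : TwoSidedIdeal C := TwoSidedIdeal.mk'
      {c : C | ∀ i j : Fin n, Matrix.single i j c ∈ spanΔ}
      (fun i j => by simp only [Matrix.single_zero]; exact spanΔ.zero_mem)
      (fun {a b} ha hb i j => by
        rw [Matrix.single_add]
        exact spanΔ.add_mem (ha i j) (hb i j))
      (fun {a} ha i j => by
        have : Matrix.single i j (-a) = -(Matrix.single i j a) := by
          ext p q; simp [Matrix.single]; split <;> simp
        rw [this]
        exact spanΔ.neg_mem (ha i j))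
      (fun {a b} hb i j => by
        have : Matrix.single i j (a * b) =
            Matrix.single i i a * Matrix.single i j b :=
          (Matrix.single_mul_single_same ..).symm
        rw [this]
        exact spanΔ.mul_mem_left _ _ (hb i j))
      (fun {a b} ha i j => by
        have : Matrix.single i j (a * b) =
            Matrix.single i j a * Matrix.single j j b :=
          (Matrix.single_mul_single_same ..).symm
        rw [this]
        exact spanΔ.mul_mem_right _ _ (ha i j)) with hS'
    -- each entry of Δ lies in S'
    have hsub : entries ⊆ (S' : Set C) := by
      rintro _ ⟨⟨p, q⟩, rfl⟩
      show _ ∈ S'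
      rw [hS', TwoSidedIdeal.mem_mk']
      intro i j
      have key : Matrix.single i j (Δ p q) =
          Matrix.single i p 1 * Δ * Matrix.single q j 1 := by
        ext a b
        simp only [Matrix.mul_apply, Matrix.single, Matrix.of_apply]
        simp [Finset.mul_sum, Finset.sum_mul, ite_and, Finset.sum_ite_eq, Finset.sum_ite_eq',
          mul_ite, ite_mul]
        by_cases h1 : i = a <;> by_cases h2 : j = b <;> simp [h1, h2]
      rw [key]
      exact spanΔ.mul_mem_right _ _
        (spanΔ.mul_mem_left _ _ (TwoSidedIdeal.subset_span rfl))
    -- hence 1 ∈ S'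
    have h1S' : (1 : C) ∈ S' :=
      TwoSidedIdeal.mem_span_iff.mp ((TwoSidedIdeal.one_mem_iff J).mpr hJtop) S' hsub
    have hstd : ∀ i : Fin n, Matrix.single i i (1 : C) ∈ spanΔ :=
      fun i => (TwoSidedIdeal.mem_mk' _ _ _ _ _ _ (1 : C)).mp h1S' i i
    -- sum them to get the identity matrix
    have hone : (1 : Matrix (Fin n) (Fin n) C) ∈ spanΔ := by
      have : (1 : Matrix (Fin n) (Fin n) C) =
          ∑ i : Fin n, Matrix.single i i (1 : C) := by
        ext a b
        rw [Matrix.sum_apply]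
        simp [Matrix.single, Matrix.one_apply, ite_and, Finset.sum_ite_eq, eq_comm]
      rw [this]
      exact spanΔ.finsetSum_mem _ _ fun i _ => hstd i
    exact spanΔ.eq_top hone
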